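/- Let F be a field of characteristic greater than d and g : V → U a nonzero polynomial map of total degree exactly d. Then the map g'(X_1,...,X_d) = Σ_{S ⊆ [d]} (-1)^{|S|} g(Σ_{j∈S} X_j) is not identically zero. -/

import Mathlib

open Finset MvPolynomial

section Aux

variable {F : Type*} [Field F]

lemma aux_eval_smul {σ : Type*} {e : ℕ} {φ : MvPolynomial σ F}
    (hφ : φ.IsHomogeneous e) (c : F) (x : σ → F) :
    eval (c • x) φ = c ^ e * eval x φ := by
  rw [eval_eq, eval_eq, Finset.mul_sum]
  refine Finset.sum_congr rfl fun s hs => ?_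
  have hdeg : ∑ i ∈ s.support, s i = e := by
    have h := hφ (mem_support_iff.mp hs)
    rwa [show Finsupp.weight (1 : σ → ℕ) = Finsupp.weight (fun _ => 1) from rfl,
      ← Finsupp.degree_eq_weight_one, Finsupp.degree_apply] at h
  have : ∏ i ∈ s.support, (c • x) i ^ s i
      = c ^ e * ∏ i ∈ s.support, x i ^ s i := by
    rw [← hdeg, ← Finset.prod_pow_eq_pow_sum, ← Finset.prod_mul_distrib]
    refine Finset.prod_congr rfl fun i _ => ?_
    rw [Pi.smul_apply, smul_eq_mul, mul_pow]
  rw [this]; ring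

lemma aux_fwdDiff_mul_const (f : F → F) (c : F) :
    fwdDiff (1:F) (fun t => f t * c) = fun t => fwdDiff (1:F) f t * c := by
  funext t; simp [fwdDiff, sub_mul]

lemma aux_fwdDiff_iter_mul_const (f : F → F) (c : F) (n : ℕ) :
    (fwdDiff (1:F))^[n] (fun t => f t * c) = fun t => (fwdDiff (1:F))^[n] f t * c := by
  induction n generalizing f with
  | zero => rfl
  | succ n ih =>
      rw [Function.iterate_succ_apply, Function.iterate_succ_apply,
        aux_fwdDiff_mul_const, ih]

lemma aux_fwdDiff_iter_sum {ι : Type*} (s : Finset ι) (f : ι → F → F) (n : ℕ) :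
    (fwdDiff (1:F))^[n] (fun t => ∑ j ∈ s, f j t)
      = fun t => ∑ j ∈ s, (fwdDiff (1:F))^[n] (f j) t := by
  induction n generalizing f with
  | zero => rfl
  | succ n ih =>
      rw [Function.iterate_succ_apply]
      have h1 : fwdDiff (1:F) (fun t => ∑ j ∈ s, f j t)
          = fun t => ∑ j ∈ s, fwdDiff (1:F) (f j) t := by
        funext t; simp [fwdDiff, Finset.sum_sub_distrib]
      rw [h1, ih]
      funext t
      refine Finset.sum_congr rfl fun j _ => ?_
      rw [← Function.iterate_succ_apply]

lemma aux_step (e : ℕ) :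
    fwdDiff (1:F) (fun t : F => t ^ e)
      = fun t => ∑ j ∈ Finset.range e, t ^ j * (e.choose j : F) := by
  funext t
  have h := add_pow t (1:F) e
  simp only [one_pow, mul_one] at h
  rw [fwdDiff, h, Finset.sum_range_succ, Nat.choose_self, Nat.cast_one, mul_one,
    add_sub_cancel_right]

lemma aux_zero : ∀ d e : ℕ, e < d → (fwdDiff (1:F))^[d] (fun t : F => t ^ e) = 0 := by
  intro d
  induction d with
  | zero => intro e h; exact absurd h (Nat.not_lt_zero e)
  | succ d ih =>
      intro e he
      rw [Function.iterate_succ_apply, aux_step,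
        aux_fwdDiff_iter_sum (Finset.range e) (fun j => fun t => t ^ j * (e.choose j : F)) d]
      funext t
      simp only [Pi.zero_apply]
      refine Finset.sum_eq_zero fun j hj => ?_
      rw [aux_fwdDiff_iter_mul_const, ih j (by have := Finset.mem_range.mp hj; omega)]
      simp

lemma aux_fact : ∀ d : ℕ, (fwdDiff (1:F))^[d] (fun t : F => t ^ d) = fun _ => (d.factorial : F) := by
  intro d
  induction d with
  | zero => funext t; simp
  | succ d ih =>
      rw [Function.iterate_succ_apply, aux_step,
        aux_fwdDiff_iter_sum (Finset.range (d+1)) (fun j => fun t => t ^ j * ((d+1).choose j : F)) d]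
      funext t
      rw [Finset.sum_range_succ]
      have h0 : ∑ j ∈ Finset.range d,
          (fwdDiff (1:F))^[d] (fun t : F => t ^ j * ((d+1).choose j : F)) t = 0 := by
        refine Finset.sum_eq_zero fun j hj => ?_
        rw [aux_fwdDiff_iter_mul_const, aux_zero d j (Finset.mem_range.mp hj)]
        simp
      rw [h0, zero_add, aux_fwdDiff_iter_mul_const, ih, Nat.choose_succ_self_right,
        Nat.factorial_succ]
      push_cast
      ring

lemma aux_alt_sum (d e : ℕ) (he : e ≤ d) :
    ∑ k ∈ Finset.range (d+1), (-1:F)^k * (d.choose k : F) * (k:F)^e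
      = (-1:F)^d * (if e = d then (d.factorial : F) else 0) := by
  have H := fwdDiff_iter_eq_sum_shift (1:F) (fun t : F => t ^ e) d 0
  have hL : (fwdDiff (1:F))^[d] (fun t : F => t^e) 0
      = if e = d then (d.factorial:F) else 0 := by
    rcases eq_or_lt_of_le he with rfl | h
    · rw [aux_fact]; simp
    · rw [aux_zero d e h]; simp [Nat.ne_of_lt h]
  rw [hL] at H
  calc ∑ k ∈ Finset.range (d+1), (-1:F)^k * (d.choose k : F) * (k:F)^e
      = ∑ k ∈ Finset.range (d+1),
          (-1:F)^d * ((((-1:ℤ)^(d-k) * (d.choose k : ℤ)) : ℤ) • ((0:F) + k • (1:F))^e) := by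
        refine Finset.sum_congr rfl fun k hk => ?_
        have hk' : k ≤ d := Nat.lt_succ_iff.mp (Finset.mem_range.mp hk)
        have hsign : (-1:F)^d * (-1:F)^(d-k) = (-1:F)^k := by
          rw [← pow_add]
          have hdk : d + (d - k) = 2*(d-k) + k := by omega
          rw [hdk, pow_add, pow_mul, neg_one_sq, one_pow, one_mul]
        rw [zero_add, nsmul_eq_mul, mul_one, zsmul_eq_mul]
        push_cast
        rw [← hsign]
        ring
    _ = (-1:F)^d * ∑ k ∈ Finset.range (d+1),
          (((-1:ℤ)^(d-k) * (d.choose k : ℤ)) : ℤ) • ((0:F) + k • (1:F))^e := by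
        rw [Finset.mul_sum]
    _ = (-1:F)^d * (if e = d then (d.factorial : F) else 0) := by rw [← H]

lemma aux_decomp {σ : Type*} (Q : MvPolynomial σ F) {N : ℕ} (hQ : Q.totalDegree ≤ N)
    (c : F) (x : σ → F) :
    eval (c • x) Q
      = ∑ e ∈ Finset.range (N+1), c ^ e * eval x (homogeneousComponent e Q) := by
  conv_lhs => rw [← sum_homogeneousComponent Q]
  rw [map_sum]
  rw [Finset.sum_congr rfl fun e _ =>
    aux_eval_smul (homogeneousComponent_isHomogeneous e Q) c x]
  refine Finset.sum_subset (Finset.range_subset_range.mpr (by omega)) fun e _ he => ?_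
  rw [homogeneousComponent_eq_zero e Q (by
    simp only [Finset.mem_range] at he
    omega)]
  simp

end Aux

/-- For F of characteristic greater than d and g a nonzero
polynomial map of total degree exactly d, the inclusion–exclusion map
g'(X_1,...,X_d) = Σ_{S ⊆ [d]} (-1)^{|S|} g(Σ_{j∈S} X_j) is not identically
zero. -/
theorem harmonic_stmt1 (F : Type*) [Field F] (m n d : ℕ)
    (hchar : ∀ k : ℕ, 0 < k → k ≤ d → (k : F) ≠ 0)
    (G : Fin n → MvPolynomial (Fin m) F)
    (hG : G ≠ 0)
    (hdeg : ∀ u, (G u).totalDegree ≤ d)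
    (hexact : ∃ u, (G u).totalDegree = d)
    (g : (Fin m → F) → (Fin n → F))
    (hg : ∀ x u, g x u = MvPolynomial.eval x (G u)) :
    ∃ X : Fin d → (Fin m → F),
      ∑ S : Finset (Fin d), ((-1 : F) ^ S.card) • g (∑ j ∈ S, X j) ≠ 0 := by
  classical
  obtain ⟨u₀, hu₀ne, hu₀d⟩ : ∃ u, G u ≠ 0 ∧ (G u).totalDegree = d := by
    rcases Nat.eq_zero_or_pos d with rfl | hd
    · obtain ⟨u, hu⟩ := Function.ne_iff.mp hG
      exact ⟨u, hu, Nat.le_zero.mp (hdeg u)⟩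
    · obtain ⟨u, hu⟩ := hexact
      refine ⟨u, fun h => ?_, hu⟩
      rw [h, MvPolynomial.totalDegree_zero] at hu
      omega
  set Q := G u₀ with hQdef
  set P := MvPolynomial.homogeneousComponent d Q with hPdef
  have hP0 : P ≠ 0 := by
    obtain ⟨s, hs, hsd⟩ := Finset.exists_mem_eq_sup Q.support
      (MvPolynomial.support_nonempty.mpr hu₀ne) (fun s => s.sum fun _ e => e)
    intro h
    have hcoeff : MvPolynomial.coeff s P = MvPolynomial.coeff s Q := by
      rw [hPdef, MvPolynomial.coeff_homogeneousComponent, if_pos]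
      show s.degree = d
      rw [← hu₀d, MvPolynomial.totalDegree, hsd]
      rfl
    rw [h] at hcoeff
    exact MvPolynomial.mem_support_iff.mp hs hcoeff.symm
  -- cardinality of F is at least d
  have hcard : (d : Cardinal) ≤ Cardinal.mk F := by
    have hinj : Function.Injective (fun k : Fin (d+1) => ((k : ℕ) : F)) := by
      have key : ∀ i j : Fin (d+1), (i:ℕ) < (j:ℕ) → ((i:ℕ):F) ≠ ((j:ℕ):F) := by
        intro i j hij h
        have h1 : (((j:ℕ) - (i:ℕ) : ℕ) : F) = 0 := by
          rw [Nat.cast_sub hij.le, h, sub_self]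
        exact hchar _ (by omega) (by have := j.is_lt; omega) h1
      intro a b hab
      rcases lt_trichotomy ((a:ℕ)) ((b:ℕ)) with h | h | h
      · exact absurd hab (key a b h)
      · exact Fin.ext h
      · exact absurd hab.symm (key b a h)
    set sF : Finset F := Finset.image (fun k : Fin (d+1) => ((k : ℕ) : F)) Finset.univ with hsF
    have hcardsF : sF.card = d + 1 := by
      rw [hsF, Finset.card_image_of_injective _ hinj, Finset.card_univ, Fintype.card_fin]
    calc (d : Cardinal) ≤ ((d + 1 : ℕ) : Cardinal) := by exact_mod_cast Nat.le_succ d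
      _ = Cardinal.mk (↑(↑sF : Set F)) := by simp [hcardsF]
      _ ≤ Cardinal.mk F := Cardinal.mk_set_le _
  -- find a point where the top homogeneous component is nonzero
  have hx : ∃ x : Fin m → F, MvPolynomial.eval x P ≠ 0 := by
    by_contra h
    push_neg at h
    exact hP0 (MvPolynomial.IsHomogeneous.eq_zero_of_forall_eval_eq_zero_of_le_card
      (MvPolynomial.homogeneousComponent_isHomogeneous d Q) h hcard)
  obtain ⟨x, hx⟩ := hx
  have hfac : (d.factorial : F) ≠ 0 := by
    rw [← Finset.prod_range_add_one_eq_factorial, Nat.cast_prod]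
    refine Finset.prod_ne_zero_iff.mpr fun i hi => ?_
    have hi' := Finset.mem_range.mp hi
    exact_mod_cast hchar (i + 1) (Nat.succ_pos i) (by omega)
  refine ⟨fun _ => x, fun hzero => ?_⟩
  set E : ℕ → F := fun e => MvPolynomial.eval x (MvPolynomial.homogeneousComponent e Q) with hE
  have e1 : (∑ S : Finset (Fin d), ((-1 : F) ^ S.card) • g (∑ j ∈ S, (fun _ : Fin d => x) j)) u₀
      = ∑ S : Finset (Fin d), (-1:F)^S.card * MvPolynomial.eval ((S.card : F) • x) Q := by
    rw [Finset.sum_apply]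
    refine Finset.sum_congr rfl fun S _ => ?_
    rw [Pi.smul_apply, smul_eq_mul, hg]
    congr 2
    simp only [Finset.sum_const]
    rw [Nat.cast_smul_eq_nsmul]
  have e2 : ∑ S : Finset (Fin d), (-1:F)^S.card * MvPolynomial.eval ((S.card : F) • x) Q
      = ∑ k ∈ Finset.range (d+1),
          (d.choose k : F) * ((-1:F)^k * MvPolynomial.eval ((k:F) • x) Q) := by
    rw [← Finset.powerset_univ, Finset.sum_powerset, Finset.card_univ, Fintype.card_fin]
    refine Finset.sum_congr rfl fun k hk => ?_
    calc ∑ S ∈ Finset.powersetCard k (Finset.univ : Finset (Fin d)),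
          (-1:F)^S.card * MvPolynomial.eval ((S.card : F) • x) Q
        = ∑ _S ∈ Finset.powersetCard k (Finset.univ : Finset (Fin d)),
            (-1:F)^k * MvPolynomial.eval ((k : F) • x) Q := by
          refine Finset.sum_congr rfl fun S hS => ?_
          rw [Finset.mem_powersetCard_univ.mp hS]
      _ = (d.choose k : F) * ((-1:F)^k * MvPolynomial.eval ((k:F) • x) Q) := by
          rw [Finset.sum_const, Finset.card_powersetCard, Finset.card_univ, Fintype.card_fin,
            nsmul_eq_mul]
  have e3 : ∑ k ∈ Finset.range (d+1),
        (d.choose k : F) * ((-1:F)^k * MvPolynomial.eval ((k:F) • x) Q)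
      = E d * ((-1:F)^d * (d.factorial : F)) := by
    calc ∑ k ∈ Finset.range (d+1),
          (d.choose k : F) * ((-1:F)^k * MvPolynomial.eval ((k:F) • x) Q)
        = ∑ k ∈ Finset.range (d+1), ∑ e ∈ Finset.range (d+1),
            E e * ((-1:F)^k * (d.choose k : F) * (k:F)^e) := by
          refine Finset.sum_congr rfl fun k _ => ?_
          rw [aux_decomp Q (hdeg u₀) (k:F) x, Finset.mul_sum, Finset.mul_sum]
          exact Finset.sum_congr rfl fun e _ => by ring
      _ = ∑ e ∈ Finset.range (d+1), ∑ k ∈ Finset.range (d+1),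
            E e * ((-1:F)^k * (d.choose k : F) * (k:F)^e) := Finset.sum_comm
      _ = ∑ e ∈ Finset.range (d+1),
            E e * ((-1:F)^d * (if e = d then (d.factorial:F) else 0)) := by
          refine Finset.sum_congr rfl fun e he => ?_
          rw [← Finset.mul_sum, aux_alt_sum d e (Nat.lt_succ_iff.mp (Finset.mem_range.mp he))]
      _ = E d * ((-1:F)^d * (d.factorial:F)) := by
          rw [Finset.sum_eq_single d]
          · simp
          · intro e _ hne; simp [hne]
          · intro h; exact absurd (Finset.self_mem_range_succ d) h
  have hfinal : E d * ((-1:F)^d * (d.factorial:F)) = 0 := by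
    rw [← e3, ← e2, ← e1, hzero]
    rfl
  have hEd : E d = 0 := by
    rcases mul_eq_zero.mp hfinal with h | h
    · exact h
    · rcases mul_eq_zero.mp h with h' | h'
      · exact absurd h' (pow_ne_zero d (neg_ne_zero.mpr one_ne_zero))
      · exact absurd h' hfac
  exact hx hEd
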